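/- Let 0 ≤ λ < α and let g: ℝ → (λ, α) be continuous. Then the upper right Dini derivative of g satisfies D⁺g(x) ∈ [λ − g(x), α − g(x)] for all x ∈ ℝ if and only if for all x₀ ∈ ℝ and x > 0 one has λ − (λ − g(x₀))·exp(−x) ≤ g(x₀ + x) ≤ α − (α − g(x₀))·exp(−x). -/

import Mathlib

open Filter

/-- Upper right Dini derivative as an `EReal`. -/
noncomputable def upperDini (f : ℝ → ℝ) (x : ℝ) : EReal :=
  limsup (fun ε : ℝ => (((f (x + ε) - f x) / ε : ℝ) : EReal)) (nhdsWithin 0 (Set.Ioi 0))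

lemma mapIoi (t : ℝ) : Filter.map (fun ε : ℝ => t + ε) (nhdsWithin 0 (Set.Ioi 0)) =
    nhdsWithin t (Set.Ioi t) := by
  have h := (Homeomorph.addLeft t).isEmbedding.map_nhdsWithin_eq (Set.Ioi 0) 0
  simpa [Set.image_const_add_Ioi] using h

lemma hlim1 : Tendsto (fun ε : ℝ => (1 - Real.exp (-ε)) / ε) (nhdsWithin 0 (Set.Ioi 0))
    (nhds 1) := by
  have h1 : HasDerivAt (fun t : ℝ => 1 - Real.exp (-t)) 1 0 := by
    have := (((hasDerivAt_id (0:ℝ)).neg).exp).const_sub 1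
    simpa using this
  have h2 := (hasDerivAt_iff_tendsto_slope.1 h1).mono_left
    (nhdsWithin_mono 0 (fun z hz => ne_of_gt hz))
  refine h2.congr fun ε => ?_
  simp [slope_def_field]

lemma rev_dir (lam alp : ℝ) (g : ℝ → ℝ)
    (h : ∀ x₀ x : ℝ, 0 < x →
      lam - (lam - g x₀) * Real.exp (-x) ≤ g (x₀ + x) ∧
      g (x₀ + x) ≤ alp - (alp - g x₀) * Real.exp (-x)) (x : ℝ) :
    upperDini g x ∈ Set.Icc ((lam - g x : ℝ) : EReal) ((alp - g x : ℝ) : EReal) := by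
  have hub : ∀ (c : ℝ), Tendsto (fun ε : ℝ => ((c * ((1 - Real.exp (-ε)) / ε) : ℝ) : EReal))
      (nhdsWithin 0 (Set.Ioi 0)) (nhds ((c : EReal))) := by
    intro c
    have : Tendsto (fun ε : ℝ => c * ((1 - Real.exp (-ε)) / ε)) (nhdsWithin 0 (Set.Ioi 0))
        (nhds c) := by simpa using (hlim1.const_mul c)
    exact (continuous_coe_real_ereal.tendsto c).comp this
  constructor
  · have hcomp : ∀ᶠ ε in nhdsWithin 0 (Set.Ioi 0),
        (((lam - g x) * ((1 - Real.exp (-ε)) / ε) : ℝ) : EReal) ≤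
          ((g (x + ε) - g x) / ε : ℝ) := by
      filter_upwards [self_mem_nhdsWithin] with ε (hε : 0 < ε)
      have := (h x ε hε).1
      rw [EReal.coe_le_coe_iff, ← mul_div_assoc, div_le_div_iff_of_pos_right hε]
      nlinarith [Real.exp_pos (-ε)]
    calc ((lam - g x : ℝ) : EReal)
        = liminf (fun ε : ℝ => (((lam - g x) * ((1 - Real.exp (-ε)) / ε) : ℝ) : EReal))
            (nhdsWithin 0 (Set.Ioi 0)) := ((hub (lam - g x)).liminf_eq).symm
      _ ≤ liminf (fun ε : ℝ => (((g (x + ε) - g x) / ε : ℝ) : EReal))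
            (nhdsWithin 0 (Set.Ioi 0)) := liminf_le_liminf hcomp
      _ ≤ upperDini g x := liminf_le_limsup
  · have hcomp : ∀ᶠ ε in nhdsWithin 0 (Set.Ioi 0),
        (((g (x + ε) - g x) / ε : ℝ) : EReal) ≤
          (((alp - g x) * ((1 - Real.exp (-ε)) / ε) : ℝ) : EReal) := by
      filter_upwards [self_mem_nhdsWithin] with ε (hε : 0 < ε)
      have := (h x ε hε).2
      rw [EReal.coe_le_coe_iff, ← mul_div_assoc, div_le_div_iff_of_pos_right hε]
      nlinarith [Real.exp_pos (-ε)]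
    calc upperDini g x
        ≤ limsup (fun ε : ℝ => (((alp - g x) * ((1 - Real.exp (-ε)) / ε) : ℝ) : EReal))
            (nhdsWithin 0 (Set.Ioi 0)) := limsup_le_limsup hcomp
      _ = ((alp - g x : ℝ) : EReal) := (hub (alp - g x)).limsup_eq

lemma fwd_dir (lam alp : ℝ) (g : ℝ → ℝ) (hg : Continuous g)
    (h : ∀ x : ℝ, upperDini g x ∈
      Set.Icc ((lam - g x : ℝ) : EReal) ((alp - g x : ℝ) : EReal))
    (x₀ x : ℝ) (hx : 0 < x) :
    lam - (lam - g x₀) * Real.exp (-x) ≤ g (x₀ + x) ∧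
      g (x₀ + x) ≤ alp - (alp - g x₀) * Real.exp (-x) := by
  have hexp1 : Real.exp (-x) ≤ 1 := Real.exp_le_one_iff.2 (by linarith)
  have hexp0 : 0 < Real.exp (-x) := Real.exp_pos _
  constructor
  · have key : ∀ ε : ℝ, 0 < ε →
        lam - (lam - g x₀) * Real.exp (-x) ≤ g (x₀ + x) + ε := by
      intro ε hε
      set c : ℝ := lam - ε - g x₀ with hc
      set B : ℝ → ℝ := fun t => -(lam - ε) + c * Real.exp (-(t - x₀)) with hB
      set B' : ℝ → ℝ := fun t => -(c * Real.exp (-(t - x₀))) with hB'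
      have hBd : ∀ t, HasDerivAt B (B' t) t := by
        intro t
        have h1 : HasDerivAt (fun t : ℝ => Real.exp (-(t - x₀)))
            (Real.exp (-(t - x₀)) * (-1)) t :=
          (((hasDerivAt_id t).sub_const x₀).neg).exp
        have := (h1.const_mul c).const_add (-(lam - ε))
        exact this.congr_deriv (by simp only [hB']; ring)
      have hf' : ∀ t ∈ Set.Ico x₀ (x₀ + x), ∀ r, g t - lam < r →
          ∃ᶠ z in nhdsWithin t (Set.Ioi t), slope (fun y => -g y) t z < r := by
        intro t _ r hr
        have h1 : (((-r : ℝ)) : EReal) < upperDini g t := by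
          refine lt_of_lt_of_le ?_ (h t).1
          exact_mod_cast (by linarith : (-r : ℝ) < lam - g t)
        have h2 : ∃ᶠ ε' in nhdsWithin 0 (Set.Ioi 0),
            (((-r : ℝ)) : EReal) < (((g (t + ε') - g t) / ε' : ℝ) : EReal) :=
          frequently_lt_of_lt_limsup (by isBoundedDefault) h1
        rw [← mapIoi t, frequently_map]
        refine h2.mp (eventually_nhdsWithin_of_forall fun ε' (hε' : 0 < ε') h3 => ?_)
        have h4 : (-r : ℝ) < (g (t + ε') - g t) / ε' := by exact_mod_cast h3
        rw [slope_def_field]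
        have : (-g (t + ε') - -g t) / (t + ε' - t) = -((g (t + ε') - g t) / ε') := by
          rw [add_sub_cancel_left]; ring
        rw [this]; linarith
      have ha : -g x₀ ≤ B x₀ := by
        have : B x₀ = -g x₀ := by
          simp only [hB, hc, sub_self, neg_zero, Real.exp_zero, mul_one]; ring
        linarith
      have bound : ∀ t ∈ Set.Ico x₀ (x₀ + x), -g t = B t → g t - lam < B' t := by
        intro t _ ht
        simp only [hB] at ht
        have h5 : c * Real.exp (-(t - x₀)) = -g t + (lam - ε) := by linarith
        have h6 : B' t = g t - lam + ε := by simp only [hB']; linarith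
        linarith
      have := image_le_of_liminf_slope_right_lt_deriv_boundary
        (f := fun y => -g y) (f' := fun t => g t - lam) (a := x₀) (b := x₀ + x)
        (hg.neg.continuousOn) hf' ha hBd bound (x := x₀ + x)
        ⟨by linarith, le_rfl⟩
      have hBval : B (x₀ + x) = -(lam - ε) + c * Real.exp (-x) := by
        simp [hB]
      rw [hBval] at this
      have h7 : -g (x₀ + x) ≤ -(lam - ε) + c * Real.exp (-x) := this
      have hcle : c * Real.exp (-x) = (lam - g x₀) * Real.exp (-x) - ε * Real.exp (-x) := by
        rw [hc]; ring
      nlinarith [mul_pos hε hexp0]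
    by_contra hcon
    push_neg at hcon
    have := key ((lam - (lam - g x₀) * Real.exp (-x) - g (x₀ + x)) / 2) (by linarith)
    linarith
  · have key : ∀ ε : ℝ, 0 < ε →
        g (x₀ + x) ≤ alp - (alp - g x₀) * Real.exp (-x) + ε := by
      intro ε hε
      set c : ℝ := alp + ε - g x₀ with hc
      set B : ℝ → ℝ := fun t => (alp + ε) - c * Real.exp (-(t - x₀)) with hB
      set B' : ℝ → ℝ := fun t => c * Real.exp (-(t - x₀)) with hB'
      have hBd : ∀ t, HasDerivAt B (B' t) t := by
        intro t
        have h1 : HasDerivAt (fun t : ℝ => Real.exp (-(t - x₀)))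
            (Real.exp (-(t - x₀)) * (-1)) t :=
          (((hasDerivAt_id t).sub_const x₀).neg).exp
        have := (h1.const_mul c).const_sub (alp + ε)
        exact this.congr_deriv (by simp only [hB']; ring)
      have hf' : ∀ t ∈ Set.Ico x₀ (x₀ + x), ∀ r, alp - g t < r →
          ∃ᶠ z in nhdsWithin t (Set.Ioi t), slope g t z < r := by
        intro t _ r hr
        have h1 : upperDini g t < ((r : ℝ) : EReal) := by
          refine lt_of_le_of_lt (h t).2 ?_
          exact_mod_cast hr
        have h2 : ∀ᶠ ε' in nhdsWithin 0 (Set.Ioi 0),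
            (((g (t + ε') - g t) / ε' : ℝ) : EReal) < ((r : ℝ) : EReal) :=
          eventually_lt_of_limsup_lt h1
        rw [← mapIoi t, frequently_map]
        refine (h2.mp (eventually_nhdsWithin_of_forall
          fun ε' (hε' : 0 < ε') h3 => ?_)).frequently
        have h4 : (g (t + ε') - g t) / ε' < r := by exact_mod_cast h3
        rw [slope_def_field, add_sub_cancel_left]
        linarith [h4]
      have ha : g x₀ ≤ B x₀ := by
        have : B x₀ = g x₀ := by
          simp only [hB, hc, sub_self, neg_zero, Real.exp_zero, mul_one]; ring
        linarith
      have bound : ∀ t ∈ Set.Ico x₀ (x₀ + x), g t = B t → alp - g t < B' t := by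
        intro t _ ht
        simp only [hB] at ht
        have h5 : c * Real.exp (-(t - x₀)) = (alp + ε) - g t := by linarith
        have h6 : B' t = alp - g t + ε := by simp only [hB']; linarith
        linarith
      have := image_le_of_liminf_slope_right_lt_deriv_boundary
        (f := g) (f' := fun t => alp - g t) (a := x₀) (b := x₀ + x)
        (hg.continuousOn) hf' ha hBd bound (x := x₀ + x)
        ⟨by linarith, le_rfl⟩
      have hBval : B (x₀ + x) = (alp + ε) - c * Real.exp (-x) := by
        simp [hB]
      rw [hBval] at this
      have hcle : c * Real.exp (-x) = (alp - g x₀) * Real.exp (-x) + ε * Real.exp (-x) := by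
        rw [hc]; ring
      nlinarith [mul_pos hε hexp0]
    by_contra hcon
    push_neg at hcon
    have := key ((g (x₀ + x) - (alp - (alp - g x₀) * Real.exp (-x))) / 2) (by linarith)
    linarith

/-- For continuous `g : ℝ → (λ,α)` with `0 ≤ λ < α`, the Dini derivative bound
`D⁺g(x) ∈ [λ − g(x), α − g(x)]` for all `x` holds iff for all `x₀` and `x > 0`,
`λ − (λ − g(x₀))e^{−x} ≤ g(x₀+x) ≤ α − (α − g(x₀))e^{−x}`. -/
theorem stmt3 (lam alp : ℝ) (hlam : 0 ≤ lam) (hla : lam < alp)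
    (g : ℝ → ℝ) (hg : Continuous g) (hrange : ∀ x, g x ∈ Set.Ioo lam alp) :
    (∀ x : ℝ, upperDini g x ∈
      Set.Icc ((lam - g x : ℝ) : EReal) ((alp - g x : ℝ) : EReal)) ↔
    (∀ x₀ x : ℝ, 0 < x →
      lam - (lam - g x₀) * Real.exp (-x) ≤ g (x₀ + x) ∧
      g (x₀ + x) ≤ alp - (alp - g x₀) * Real.exp (-x)) := by
  constructor
  · exact fun h x₀ x hx => fwd_dir lam alp g hg h x₀ x hx
  · exact fun h x => rev_dir lam alp g h x
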